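/- Let X_1,…,X_n be independent integer-valued random variables. Suppose that for every subset A ⊆ {1,…,n} and every bounded measurable function f : ℝ^{|A|} → ℝ that is nondecreasing in each coordinate, the map s ↦ E[f(X_i, i ∈ A) | Σ_{i∈A} X_i = s] is nondecreasing on the set of integers s with P(Σ_{i∈A} X_i = s) > 0. Then for every integer s with P(Σ_{i=1}^n X_i = s) > 0, the conditional distribution of (X_1,…,X_n) given Σ_{i=1}^n X_i = s is negatively associated (NA). -/

import Mathlib

open MeasureTheory ProbabilityTheory

/-- `f` depends only on the coordinates in `A`. -/
def DepOn {n : ℕ} (f : (Fin n → ℝ) → ℝ) (A : Set (Fin n)) : Prop :=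
  ∀ x y : Fin n → ℝ, (∀ i ∈ A, x i = y i) → f x = f y

/-- `f` is bounded. -/
def IsBdd {α : Type*} (f : α → ℝ) : Prop :=
  ∃ C : ℝ, ∀ x, |f x| ≤ C

/-- A random vector `X = (X_1, …, X_n)` (under the measure `μ`) is negatively associated:
for every index set `A` and all bounded measurable functions `f, g`, nondecreasing in each
coordinate, depending only on the coordinates in `A` resp. `Aᶜ`, `Cov (f(X), g(X)) ≤ 0`. -/
def IsNA {Ω : Type*} [MeasurableSpace Ω] (μ : Measure Ω) {n : ℕ}
    (X : Ω → Fin n → ℝ) : Prop :=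
  ∀ (A : Set (Fin n)) (f g : (Fin n → ℝ) → ℝ),
    Measurable f → Measurable g → Monotone f → Monotone g → IsBdd f → IsBdd g →
    DepOn f A → DepOn g Aᶜ →
    ∫ ω, f (X ω) * g (X ω) ∂μ ≤ (∫ ω, f (X ω) ∂μ) * ∫ ω, g (X ω) ∂μ

section helper
variable {Ω : Type*} [MeasurableSpace Ω]

lemma bddIntegrable {ν : Measure Ω} [IsFiniteMeasure ν] {h : Ω → ℝ} (hm : Measurable h)
    {C : ℝ} (hb : ∀ ω, |h ω| ≤ C) : Integrable h ν :=
  ⟨hm.aestronglyMeasurable, HasFiniteIntegral.of_bounded (C := C)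
    (Filter.Eventually.of_forall (fun ω => by simpa using hb ω))⟩

lemma condIntegral {μ : Measure Ω} [IsFiniteMeasure μ] {c : Set Ω}
    (h0 : μ c ≠ 0) (h : Ω → ℝ) :
    (∫ ω, h ω ∂(μ[|c])) * (μ c).toReal = ∫ ω in c, h ω ∂μ := by
  have hc : (μ c).toReal ≠ 0 := ENNReal.toReal_ne_zero.2 ⟨h0, measure_ne_top μ c⟩
  rw [ProbabilityTheory.cond, integral_smul_measure, ENNReal.toReal_inv, smul_eq_mul]
  field_simp

lemma indepMul {μ : Measure Ω} {n : ℕ} {X : Fin n → Ω → ℤ} (hX : ∀ i, Measurable (X i))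
    (hindep : iIndepFun X μ) [IsProbabilityMeasure μ]
    (A' : Finset (Fin n)) (F : (A' → ℤ) → ℝ) (G : ((A'ᶜ : Finset (Fin n)) → ℤ) → ℝ) :
    ∫ ω, F (fun i => X i ω) * G (fun i => X i ω) ∂μ =
      (∫ ω, F (fun i => X i ω) ∂μ) * ∫ ω, G (fun i => X i ω) ∂μ := by
  have h := (hindep.indepFun_finset A' A'ᶜ disjoint_compl_right hX).comp
    (measurable_of_countable F) (measurable_of_countable G)
  have hFm : Measurable (fun ω => F (fun i => X i ω)) :=
    (measurable_of_countable F).comp (measurable_pi_lambda _ (fun i => hX i))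
  have hGm : Measurable (fun ω => G (fun i => X i ω)) :=
    (measurable_of_countable G).comp (measurable_pi_lambda _ (fun i => hX i))
  exact h.integral_fun_mul_eq_mul_integral hFm.aestronglyMeasurable hGm.aestronglyMeasurable

end helper

set_option maxHeartbeats 1000000 in
/-- if `X_1, …, X_n` are independent integer-valued random variables such that
for every subset `A` and every bounded measurable function `f`, nondecreasing in each
coordinate and depending only on the coordinates in `A`, the conditional expectation
`E[f(X) | ∑_{i ∈ A} X_i = s]` is nondecreasing in `s` (over the integers `s` of positive
probability), then for every integer `s` with `P(∑ X_i = s) > 0` the conditional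
distribution of `(X_1, …, X_n)` given `∑ X_i = s` is negatively associated. -/


theorem stmt0 {Ω : Type*} [MeasurableSpace Ω] (μ : Measure Ω) [IsProbabilityMeasure μ]
    {n : ℕ} (X : Fin n → Ω → ℤ) (hX : ∀ i, Measurable (X i))
    (hindep : iIndepFun X μ)
    (hmono : ∀ (A : Finset (Fin n)) (f : (Fin n → ℝ) → ℝ),
      Measurable f → Monotone f → IsBdd f → DepOn f ↑A →
      ∀ s t : ℤ, s ≤ t →
        0 < μ {ω | (∑ i ∈ A, X i ω) = s} → 0 < μ {ω | (∑ i ∈ A, X i ω) = t} →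
        ∫ ω, f (fun i => (X i ω : ℝ)) ∂(μ[|{ω | (∑ i ∈ A, X i ω) = s}]) ≤
          ∫ ω, f (fun i => (X i ω : ℝ)) ∂(μ[|{ω | (∑ i ∈ A, X i ω) = t}])) :
    ∀ s : ℤ, 0 < μ {ω | (∑ i, X i ω) = s} →
      IsNA (μ[|{ω | (∑ i, X i ω) = s}]) (fun ω i => (X i ω : ℝ)) := by
  classical
  intro s hs A f g hfm hgm hfmono hgmono hfb hgb hfdep hgdep
  obtain ⟨Cf, hCf⟩ := hfb
  obtain ⟨Cg, hCg⟩ := hgb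
  set Xc : Ω → Fin n → ℝ := fun ω i => (X i ω : ℝ) with hXcdef
  have hXc : Measurable Xc :=
    measurable_pi_lambda _ (fun i => (measurable_of_countable _).comp (hX i))
  set E : Set Ω := {ω | (∑ i, X i ω) = s} with hEdef
  have hEmeas : MeasurableSet E :=
    (Finset.measurable_sum Finset.univ (fun i _ => hX i)) (measurableSet_singleton s)
  have hE0 : μ E ≠ 0 := hs.ne'
  haveI hνP : IsProbabilityMeasure (μ[|E]) := cond_isProbabilityMeasure hE0
  set ν : Measure Ω := μ[|E] with hνdef
  set A' : Finset (Fin n) := A.toFinset with hA'def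
  have hAc : ((A'ᶜ : Finset (Fin n)) : Set (Fin n)) = Aᶜ := by
    rw [Finset.coe_compl, Set.coe_toFinset]
  have hAs : ((A' : Finset (Fin n)) : Set (Fin n)) = A := Set.coe_toFinset A
  set T : Ω → ℤ := fun ω => ∑ i ∈ A', X i ω with hTdef
  set R : Ω → ℤ := fun ω => ∑ i ∈ A'ᶜ, X i ω with hRdef
  have hTR : ∀ ω, T ω + R ω = ∑ i, X i ω := fun ω => Finset.sum_add_sum_compl A' _
  have hTmeas : Measurable T := Finset.measurable_sum _ (fun i _ => hX i)
  have hRmeas : Measurable R := Finset.measurable_sum _ (fun i _ => hX i)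
  have hTset : ∀ t : ℤ, MeasurableSet {ω | T ω = t} :=
    fun t => hTmeas (measurableSet_singleton t)
  have hRset : ∀ u : ℤ, MeasurableSet {ω | R ω = u} :=
    fun u => hRmeas (measurableSet_singleton u)
  set φ : ℤ → ℝ := fun t =>
    if 0 < μ {ω | T ω = t} then ∫ ω, f (Xc ω) ∂(μ[|{ω | T ω = t}]) else 0 with hφdef
  set ψ : ℤ → ℝ := fun t =>
    if 0 < μ {ω | R ω = s - t} then ∫ ω, g (Xc ω) ∂(μ[|{ω | R ω = s - t}]) else 0 with hψdef
  -- representations through blocks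
  set F0 : (A' → ℤ) → ℝ :=
    fun x => f (fun i => if h : i ∈ A' then ((x ⟨i, h⟩ : ℤ) : ℝ) else 0) with hF0def
  set G0 : ((A'ᶜ : Finset (Fin n)) → ℤ) → ℝ :=
    fun x => g (fun i => if h : i ∈ A'ᶜ then ((x ⟨i, h⟩ : ℤ) : ℝ) else 0) with hG0def
  have hF0 : ∀ ω, F0 (fun i => X i ω) = f (Xc ω) := by
    intro ω
    apply hfdep
    intro i hi
    have hiA : i ∈ A' := by simpa [hA'def] using hi
    simp [hiA, hXcdef]
  have hG0 : ∀ ω, G0 (fun i => X i ω) = g (Xc ω) := by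
    intro ω
    apply hgdep
    intro i hi
    have hiA : i ∈ A'ᶜ := by simp [hA'def]; simpa using hi
    simp [hiA, hXcdef]
  have hTsum : ∀ ω, (∑ i : A', X i ω) = T ω := by
    intro ω; rw [hTdef]; exact Finset.sum_coe_sort A' (fun i => X i ω)
  have hRsum : ∀ ω, (∑ i : (A'ᶜ : Finset (Fin n)), X i ω) = R ω := by
    intro ω; rw [hRdef]; exact Finset.sum_coe_sort A'ᶜ (fun i => X i ω)
  -- independence of T and R
  have hTRindep : ProbabilityTheory.IndepFun T R μ := by
    have h := (hindep.indepFun_finset A' A'ᶜ disjoint_compl_right hX).comp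
      (measurable_of_countable (fun x : A' → ℤ => ∑ i, x i))
      (measurable_of_countable (fun x : (A'ᶜ : Finset (Fin n)) → ℤ => ∑ i, x i))
    have e1 : (fun x : A' → ℤ => ∑ i, x i) ∘ (fun ω (i : A') => X i ω) = T := by
      funext ω; exact hTsum ω
    have e2 : (fun x : (A'ᶜ : Finset (Fin n)) → ℤ => ∑ i, x i) ∘
        (fun ω (i : (A'ᶜ : Finset (Fin n))) => X i ω) = R := by
      funext ω; exact hRsum ω
    rwa [e1, e2] at h
  have hμinter : ∀ t u : ℤ, μ ({ω | T ω = t} ∩ {ω | R ω = u}) =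
      μ {ω | T ω = t} * μ {ω | R ω = u} := by
    intro t u
    have := hTRindep.measure_inter_preimage_eq_mul {t} {u}
      (measurableSet_singleton t) (measurableSet_singleton u)
    simpa [Set.preimage] using this
  -- integral of f against the indicator of {T = t}
  have haf : ∀ t : ℤ, ∫ ω, f (Xc ω) * (if T ω = t then (1:ℝ) else 0) ∂μ =
      φ t * (μ {ω | T ω = t}).toReal := by
    intro t
    have h1 : ∫ ω, f (Xc ω) * (if T ω = t then (1:ℝ) else 0) ∂μ =
        ∫ ω in {ω | T ω = t}, f (Xc ω) ∂μ := by
      rw [← integral_indicator (hTset t)]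
      congr 1; funext ω
      by_cases h : T ω = t <;> simp [Set.indicator_apply, h]
    rw [h1]
    by_cases h : 0 < μ {ω | T ω = t}
    · rw [hφdef]; simp only [if_pos h]
      exact (condIntegral h.ne' _).symm
    · have h0 : μ {ω | T ω = t} = 0 := by
        simpa using (not_lt.mp h)
      rw [hφdef]; simp only [if_neg h]
      rw [Measure.restrict_eq_zero.mpr h0, h0]
      simp
  have hbg : ∀ t : ℤ, ∫ ω, g (Xc ω) * (if R ω = s - t then (1:ℝ) else 0) ∂μ =
      ψ t * (μ {ω | R ω = s - t}).toReal := by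
    intro t
    have h1 : ∫ ω, g (Xc ω) * (if R ω = s - t then (1:ℝ) else 0) ∂μ =
        ∫ ω in {ω | R ω = s - t}, g (Xc ω) ∂μ := by
      rw [← integral_indicator (hRset (s - t))]
      congr 1; funext ω
      by_cases h : R ω = s - t <;> simp [Set.indicator_apply, h]
    rw [h1]
    by_cases h : 0 < μ {ω | R ω = s - t}
    · rw [hψdef]; simp only [if_pos h]
      exact (condIntegral h.ne' _).symm
    · have h0 : μ {ω | R ω = s - t} = 0 := by
        simpa using (not_lt.mp h)
      rw [hψdef]; simp only [if_neg h]
      rw [Measure.restrict_eq_zero.mpr h0, h0]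
      simp
  have hTsum' : ∀ ω, (∑ i ∈ A'.attach, X i ω) = T ω :=
    fun ω => Finset.sum_attach A' (fun i => X i ω)
  have hRsum' : ∀ ω, (∑ i ∈ A'ᶜ.attach, X i ω) = R ω :=
    fun ω => Finset.sum_attach A'ᶜ (fun i => X i ω)
  have hIT : ∀ t : ℤ, ∫ ω, (if T ω = t then (1:ℝ) else 0) ∂μ = (μ {ω | T ω = t}).toReal := by
    intro t
    rw [← measureReal_def, ← integral_indicator_one (hTset t)]
    congr 1; funext ω
    by_cases h : T ω = t <;> simp [Set.indicator_apply, h]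
  have hIB : ∀ u : ℤ, ∫ ω, (if R ω = u then (1:ℝ) else 0) ∂μ = (μ {ω | R ω = u}).toReal := by
    intro u
    rw [← measureReal_def, ← integral_indicator_one (hRset u)]
    congr 1; funext ω
    by_cases h : R ω = u <;> simp [Set.indicator_apply, h]
  have hslice_f : ∀ t : ℤ, ∫ ω in {ω | T ω = t} ∩ {ω | R ω = s - t}, f (Xc ω) ∂μ =
      (φ t * (μ {ω | T ω = t}).toReal) * (μ {ω | R ω = s - t}).toReal := by
    intro t
    have h := indepMul hX hindep A'
      (fun x => F0 x * (if (∑ i, x i) = t then (1:ℝ) else 0))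
      (fun x => (if (∑ i, x i) = s - t then (1:ℝ) else 0))
    calc ∫ ω in {ω | T ω = t} ∩ {ω | R ω = s - t}, f (Xc ω) ∂μ
        = ∫ ω, (F0 (fun i => X i ω) * (if (∑ i : A', X i ω) = t then (1:ℝ) else 0)) *
            (if (∑ i : (A'ᶜ : Finset (Fin n)), X i ω) = s - t then (1:ℝ) else 0) ∂μ := by
          rw [← integral_indicator ((hTset t).inter (hRset (s - t)))]
          congr 1; funext ω
          by_cases h1 : T ω = t <;> by_cases h2 : R ω = s - t <;>
            simp [Set.indicator_apply, h1, h2, hF0 ω, hTsum', hRsum']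
      _ = (∫ ω, F0 (fun i => X i ω) * (if (∑ i : A', X i ω) = t then (1:ℝ) else 0) ∂μ) *
            ∫ ω, (if (∑ i : (A'ᶜ : Finset (Fin n)), X i ω) = s - t then (1:ℝ) else 0) ∂μ := h
      _ = (φ t * (μ {ω | T ω = t}).toReal) * (μ {ω | R ω = s - t}).toReal := by
          congr 1
          · rw [← haf t]; congr 1; funext ω; rw [hF0 ω, hTsum ω]
          · rw [← hIB (s - t)]; congr 1; funext ω; rw [hRsum ω]
  have hslice_g : ∀ t : ℤ, ∫ ω in {ω | T ω = t} ∩ {ω | R ω = s - t}, g (Xc ω) ∂μ =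
      (μ {ω | T ω = t}).toReal * (ψ t * (μ {ω | R ω = s - t}).toReal) := by
    intro t
    have h := indepMul hX hindep A'
      (fun x => (if (∑ i, x i) = t then (1:ℝ) else 0))
      (fun x => G0 x * (if (∑ i, x i) = s - t then (1:ℝ) else 0))
    calc ∫ ω in {ω | T ω = t} ∩ {ω | R ω = s - t}, g (Xc ω) ∂μ
        = ∫ ω, (if (∑ i : A', X i ω) = t then (1:ℝ) else 0) *
            (G0 (fun i => X i ω) * (if (∑ i : (A'ᶜ : Finset (Fin n)), X i ω) = s - t then (1:ℝ) else 0)) ∂μ := by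
          rw [← integral_indicator ((hTset t).inter (hRset (s - t)))]
          congr 1; funext ω
          by_cases h1 : T ω = t <;> by_cases h2 : R ω = s - t <;>
            simp [Set.indicator_apply, h1, h2, hG0 ω, hTsum', hRsum']
      _ = (∫ ω, (if (∑ i : A', X i ω) = t then (1:ℝ) else 0) ∂μ) *
            ∫ ω, G0 (fun i => X i ω) * (if (∑ i : (A'ᶜ : Finset (Fin n)), X i ω) = s - t then (1:ℝ) else 0) ∂μ := h
      _ = (μ {ω | T ω = t}).toReal * (ψ t * (μ {ω | R ω = s - t}).toReal) := by
          congr 1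
          · rw [← hIT t]; congr 1; funext ω; rw [hTsum ω]
          · rw [← hbg t]; congr 1; funext ω; rw [hG0 ω, hRsum ω]
  have hslice_fg : ∀ t : ℤ, ∫ ω in {ω | T ω = t} ∩ {ω | R ω = s - t}, f (Xc ω) * g (Xc ω) ∂μ =
      (φ t * (μ {ω | T ω = t}).toReal) * (ψ t * (μ {ω | R ω = s - t}).toReal) := by
    intro t
    have h := indepMul hX hindep A'
      (fun x => F0 x * (if (∑ i, x i) = t then (1:ℝ) else 0))
      (fun x => G0 x * (if (∑ i, x i) = s - t then (1:ℝ) else 0))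
    calc ∫ ω in {ω | T ω = t} ∩ {ω | R ω = s - t}, f (Xc ω) * g (Xc ω) ∂μ
        = ∫ ω, (F0 (fun i => X i ω) * (if (∑ i : A', X i ω) = t then (1:ℝ) else 0)) *
            (G0 (fun i => X i ω) * (if (∑ i : (A'ᶜ : Finset (Fin n)), X i ω) = s - t then (1:ℝ) else 0)) ∂μ := by
          rw [← integral_indicator ((hTset t).inter (hRset (s - t)))]
          congr 1; funext ω
          by_cases h1 : T ω = t <;> by_cases h2 : R ω = s - t <;>
            simp [Set.indicator_apply, h1, h2, hF0 ω, hG0 ω, hTsum', hRsum']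
      _ = (∫ ω, F0 (fun i => X i ω) * (if (∑ i : A', X i ω) = t then (1:ℝ) else 0) ∂μ) *
            ∫ ω, G0 (fun i => X i ω) * (if (∑ i : (A'ᶜ : Finset (Fin n)), X i ω) = s - t then (1:ℝ) else 0) ∂μ := h
      _ = (φ t * (μ {ω | T ω = t}).toReal) * (ψ t * (μ {ω | R ω = s - t}).toReal) := by
          congr 1
          · rw [← haf t]; congr 1; funext ω; rw [hF0 ω, hTsum ω]
          · rw [← hbg t]; congr 1; funext ω; rw [hG0 ω, hRsum ω]
  -- pass to the conditional measure
  have hsetE : ∀ t : ℤ, {ω | T ω = t} ∩ E = {ω | T ω = t} ∩ {ω | R ω = s - t} := by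
    intro t
    ext ω
    simp only [Set.mem_inter_iff, Set.mem_setOf_eq, hEdef]
    have := hTR ω
    constructor
    · rintro ⟨h1, h2⟩; exact ⟨h1, by omega⟩
    · rintro ⟨h1, h2⟩; exact ⟨h1, by omega⟩
  have hνset : ∀ (t : ℤ) (h : Ω → ℝ), ∫ ω in {ω | T ω = t}, h ω ∂ν =
      (μ E)⁻¹.toReal * ∫ ω in {ω | T ω = t} ∩ {ω | R ω = s - t}, h ω ∂μ := by
    intro t h
    rw [hνdef, ProbabilityTheory.cond, Measure.restrict_smul, integral_smul_measure,
      Measure.restrict_restrict (hTset t), hsetE t, smul_eq_mul]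
  have hνmeasT : ∀ t : ℤ, (ν {ω | T ω = t}).toReal =
      (μ E)⁻¹.toReal * ((μ {ω | T ω = t}).toReal * (μ {ω | R ω = s - t}).toReal) := by
    intro t
    rw [hνdef, cond_apply hEmeas, Set.inter_comm E, hsetE t, hμinter t (s - t)]
    rw [ENNReal.toReal_mul, ENNReal.toReal_mul]
  have hKf : ∀ t : ℤ, ∫ ω in {ω | T ω = t}, f (Xc ω) ∂ν =
      φ t * (ν {ω | T ω = t}).toReal := by
    intro t; rw [hνset t, hslice_f t, hνmeasT t]; ring
  have hKg : ∀ t : ℤ, ∫ ω in {ω | T ω = t}, g (Xc ω) ∂ν =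
      ψ t * (ν {ω | T ω = t}).toReal := by
    intro t; rw [hνset t, hslice_g t, hνmeasT t]; ring
  have hKfg : ∀ t : ℤ, ∫ ω in {ω | T ω = t}, f (Xc ω) * g (Xc ω) ∂ν =
      (φ t * ψ t) * (ν {ω | T ω = t}).toReal := by
    intro t; rw [hνset t, hslice_fg t, hνmeasT t]; ring
  -- decomposition of integrals over the fibers of T
  have hdecomp : ∀ (h : Ω → ℝ), Integrable h ν →
      ∫ ω, h ω ∂ν = ∑' t : ℤ, ∫ ω in {ω | T ω = t}, h ω ∂ν := by
    intro h hint
    have hU : (⋃ t : ℤ, {ω | T ω = t}) = Set.univ := by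
      ext ω; simp
    have hd : Pairwise (Function.onFun Disjoint (fun t : ℤ => {ω | T ω = t})) := by
      intro a b hab
      rw [Function.onFun, Set.disjoint_left]
      intro ω h1 h2
      exact hab (h1.symm.trans h2)
    have hio : IntegrableOn h (⋃ t : ℤ, {ω | T ω = t}) ν := by
      rw [hU]; exact hint.integrableOn
    have := integral_iUnion hTset hd hio
    rw [hU] at this
    simpa using this
  have hconst : ∀ (t : ℤ) (c : ℤ → ℝ), ∫ ω in {ω | T ω = t}, c (T ω) ∂ν =
      c t * (ν {ω | T ω = t}).toReal := by
    intro t c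
    rw [setIntegral_congr_fun (hTset t) (g := fun _ => c t) (fun ω hω => by rw [hω]),
      setIntegral_const, smul_eq_mul, mul_comm, measureReal_def]
  -- integrability
  have hCf0 : 0 ≤ Cf := le_trans (abs_nonneg _) (hCf 0)
  have hCg0 : 0 ≤ Cg := le_trans (abs_nonneg _) (hCg 0)
  have hfint : Integrable (fun ω => f (Xc ω)) ν :=
    bddIntegrable (hfm.comp hXc) (fun ω => hCf (Xc ω))
  have hgint : Integrable (fun ω => g (Xc ω)) ν :=
    bddIntegrable (hgm.comp hXc) (fun ω => hCg (Xc ω))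
  have hfgint : Integrable (fun ω => f (Xc ω) * g (Xc ω)) ν :=
    bddIntegrable ((hfm.comp hXc).mul (hgm.comp hXc))
      (fun ω => by rw [abs_mul]
                   exact mul_le_mul (hCf _) (hCg _) (abs_nonneg _) hCf0)
  have hφbdd : ∀ t, |φ t| ≤ Cf := by
    intro t
    rw [hφdef]
    by_cases h : 0 < μ {ω | T ω = t}
    · simp only [if_pos h]
      haveI : IsProbabilityMeasure (μ[|{ω | T ω = t}]) := cond_isProbabilityMeasure h.ne'
      rw [← Real.norm_eq_abs]
      calc ‖∫ ω, f (Xc ω) ∂(μ[|{ω | T ω = t}])‖ ≤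
          Cf * ((μ[|{ω | T ω = t}]) Set.univ).toReal :=
            norm_integral_le_of_norm_le_const
              (Filter.Eventually.of_forall (fun ω => by simpa using hCf (Xc ω)))
        _ = Cf := by simp
    · simp only [if_neg h]; simpa using hCf0
  have hψbdd : ∀ t, |ψ t| ≤ Cg := by
    intro t
    rw [hψdef]
    by_cases h : 0 < μ {ω | R ω = s - t}
    · simp only [if_pos h]
      haveI : IsProbabilityMeasure (μ[|{ω | R ω = s - t}]) := cond_isProbabilityMeasure h.ne'
      rw [← Real.norm_eq_abs]
      calc ‖∫ ω, g (Xc ω) ∂(μ[|{ω | R ω = s - t}])‖ ≤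
          Cg * ((μ[|{ω | R ω = s - t}]) Set.univ).toReal :=
            norm_integral_le_of_norm_le_const
              (Filter.Eventually.of_forall (fun ω => by simpa using hCg (Xc ω)))
        _ = Cg := by simp
    · simp only [if_neg h]; simpa using hCg0
  have huint : Integrable (fun ω => φ (T ω)) ν :=
    bddIntegrable ((measurable_of_countable φ).comp hTmeas) (fun ω => hφbdd (T ω))
  have hvint : Integrable (fun ω => ψ (T ω)) ν :=
    bddIntegrable ((measurable_of_countable ψ).comp hTmeas) (fun ω => hψbdd (T ω))
  have huvint : Integrable (fun ω => φ (T ω) * ψ (T ω)) ν :=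
    bddIntegrable (((measurable_of_countable φ).comp hTmeas).mul
        ((measurable_of_countable ψ).comp hTmeas))
      (fun ω => by rw [abs_mul]
                   exact mul_le_mul (hφbdd _) (hψbdd _) (abs_nonneg _) hCf0)
  -- the three integral identities
  have hIf : ∫ ω, f (Xc ω) ∂ν = ∫ ω, φ (T ω) ∂ν := by
    rw [hdecomp _ hfint, hdecomp _ huint]
    exact tsum_congr (fun t => by rw [hKf t, hconst t φ])
  have hIg : ∫ ω, g (Xc ω) ∂ν = ∫ ω, ψ (T ω) ∂ν := by
    rw [hdecomp _ hgint, hdecomp _ hvint]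
    exact tsum_congr (fun t => by rw [hKg t, hconst t ψ])
  have hIfg : ∫ ω, f (Xc ω) * g (Xc ω) ∂ν = ∫ ω, φ (T ω) * ψ (T ω) ∂ν := by
    rw [hdecomp _ hfgint, hdecomp _ huvint]
    exact tsum_congr (fun t => by rw [hKfg t, hconst t (fun t => φ t * ψ t)])
  -- positivity transfer
  have hνT : ∀ t : ℤ, 0 < ν {ω | T ω = t} →
      0 < μ {ω | T ω = t} ∧ 0 < μ {ω | R ω = s - t} := by
    intro t ht
    have htR : 0 < (ν {ω | T ω = t}).toReal :=
      ENNReal.toReal_pos ht.ne' (measure_ne_top ν _)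
    constructor
    · by_contra h
      have h0 : μ {ω | T ω = t} = 0 := by simpa using h
      rw [hνmeasT t, h0] at htR
      simp at htR
    · by_contra h
      have h0 : μ {ω | R ω = s - t} = 0 := by simpa using h
      rw [hνmeasT t, h0] at htR
      simp at htR
  -- monotonicity of φ and antitonicity of ψ on the support
  have hφmono : ∀ t u : ℤ, t ≤ u → 0 < μ {ω | T ω = t} → 0 < μ {ω | T ω = u} →
      φ t ≤ φ u := by
    intro t u htu h1 h2
    rw [hφdef]
    simp only [if_pos h1, if_pos h2]
    have hdep' : DepOn f ↑A' := by rw [hA'def, Set.coe_toFinset]; exact hfdep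
    exact hmono A' f hfm hfmono ⟨Cf, hCf⟩ hdep' t u htu h1 h2
  have hψanti : ∀ t u : ℤ, t ≤ u → 0 < μ {ω | R ω = s - t} → 0 < μ {ω | R ω = s - u} →
      ψ u ≤ ψ t := by
    intro t u htu h1 h2
    rw [hψdef]
    simp only [if_pos h1, if_pos h2]
    have hdep' : DepOn g ↑(A'ᶜ) := by rw [hAc]; exact hgdep
    exact hmono A'ᶜ g hgm hgmono ⟨Cg, hCg⟩ hdep' (s - u) (s - t) (by omega) h2 h1
  -- a.e. support
  have hsupp : ∀ᵐ ω ∂ν, 0 < ν {ω' | T ω' = T ω} := by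
    rw [ae_iff]
    have hsub : {ω | ¬ 0 < ν {ω' | T ω' = T ω}} ⊆
        ⋃ t ∈ {t : ℤ | ν {ω' | T ω' = t} = 0}, {ω | T ω = t} := by
      intro ω hω
      simp only [Set.mem_setOf_eq, not_lt, le_zero_iff] at hω
      exact Set.mem_biUnion hω rfl
    refine measure_mono_null hsub ?_
    rw [measure_biUnion_null_iff (Set.to_countable _)]
    intro t ht
    exact ht
  -- Chebyshev / covariance inequality for φ(T) and ψ(T)
  set Iu := ∫ ω, φ (T ω) ∂ν with hIu
  set Iv := ∫ ω, ψ (T ω) ∂ν with hIv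
  set Iuv := ∫ ω, φ (T ω) * ψ (T ω) ∂ν with hIuv
  have hprodneg : ∀ ω ω', 0 < ν {ω'' | T ω'' = T ω} → 0 < ν {ω'' | T ω'' = T ω'} →
      (φ (T ω) - φ (T ω')) * (ψ (T ω) - ψ (T ω')) ≤ 0 := by
    intro ω ω' h1 h2
    obtain ⟨hT1, hR1⟩ := hνT _ h1
    obtain ⟨hT2, hR2⟩ := hνT _ h2
    rcases le_total (T ω) (T ω') with h | h
    · exact mul_nonpos_of_nonpos_of_nonneg
        (sub_nonpos.mpr (hφmono _ _ h hT1 hT2))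
        (sub_nonneg.mpr (hψanti _ _ h hR1 hR2))
    · exact mul_nonpos_of_nonneg_of_nonpos
        (sub_nonneg.mpr (hφmono _ _ h hT2 hT1))
        (sub_nonpos.mpr (hψanti _ _ h hR2 hR1))
  have hh : ∀ᵐ ω ∂ν, φ (T ω) * ψ (T ω) - φ (T ω) * Iv - ψ (T ω) * Iu + Iuv ≤ 0 := by
    filter_upwards [hsupp] with ω hω
    have e : ∫ ω', (φ (T ω) - φ (T ω')) * (ψ (T ω) - ψ (T ω')) ∂ν =
        φ (T ω) * ψ (T ω) - φ (T ω) * Iv - ψ (T ω) * Iu + Iuv := by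
      have e1 : (fun ω' => (φ (T ω) - φ (T ω')) * (ψ (T ω) - ψ (T ω'))) =
          fun ω' => (φ (T ω) * ψ (T ω) - φ (T ω) * ψ (T ω')) -
            (ψ (T ω) * φ (T ω') - φ (T ω') * ψ (T ω')) := by
        funext ω'; ring
      have i3 : Integrable (fun ω' => φ (T ω) * ψ (T ω')) ν := hvint.const_mul _
      have i4 : Integrable (fun ω' => ψ (T ω) * φ (T ω')) ν := huint.const_mul _
      have i5 : Integrable (fun ω' => φ (T ω) * ψ (T ω) - φ (T ω) * ψ (T ω')) ν :=
        (integrable_const _).sub i3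
      have i6 : Integrable (fun ω' => ψ (T ω) * φ (T ω') - φ (T ω') * ψ (T ω')) ν :=
        i4.sub huvint
      rw [e1, integral_sub i5 i6,
          integral_sub (integrable_const _) i3,
          integral_sub i4 huvint,
          integral_const, integral_const_mul, integral_const_mul]
      simp only [measure_univ, probReal_univ, ENNReal.toReal_one, smul_eq_mul, one_mul]
      rw [← hIu, ← hIv, ← hIuv]
      ring
    rw [← e]
    refine integral_nonpos_of_ae ?_
    filter_upwards [hsupp] with ω' hω'
    exact hprodneg ω ω' hω hω'
  have houter : ∫ ω, (φ (T ω) * ψ (T ω) - φ (T ω) * Iv - ψ (T ω) * Iu + Iuv) ∂ν ≤ 0 :=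
    integral_nonpos_of_ae hh
  have hexp : ∫ ω, (φ (T ω) * ψ (T ω) - φ (T ω) * Iv - ψ (T ω) * Iu + Iuv) ∂ν =
      Iuv - Iu * Iv - Iv * Iu + Iuv := by
    have j3 : Integrable (fun ω => φ (T ω) * Iv) ν := huint.mul_const _
    have j4 : Integrable (fun ω => ψ (T ω) * Iu) ν := hvint.mul_const _
    have j5 : Integrable (fun ω => φ (T ω) * ψ (T ω) - φ (T ω) * Iv) ν := huvint.sub j3
    have j6 : Integrable (fun ω => φ (T ω) * ψ (T ω) - φ (T ω) * Iv - ψ (T ω) * Iu) ν :=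
      j5.sub j4
    rw [integral_add j6 (integrable_const _),
        integral_sub j5 j4,
        integral_sub huvint j3,
        integral_const, integral_mul_const, integral_mul_const]
    simp only [measure_univ, probReal_univ, ENNReal.toReal_one, smul_eq_mul, one_mul]
    rw [← hIu, ← hIv, ← hIuv]
  have hcheb : Iuv ≤ Iu * Iv := by
    rw [hexp] at houter
    nlinarith [houter]
  have final : ∫ ω, f (Xc ω) * g (Xc ω) ∂ν ≤ (∫ ω, f (Xc ω) ∂ν) * ∫ ω, g (Xc ω) ∂ν := by
    rw [hIfg, hIf, hIg]
    exact hcheb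
  exact final
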